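/- For every odd integer n ≥ 3, the cycle graph C_n satisfies r^-_χ(C_n) = 3; that is, χ(C_n) = 3 and the minimum, over all proper 3-colourings c of C_n, of the number of vertices yielding a rainbow neighbourhood with respect to c equals 3. -/

import Mathlib

open SimpleGraph

/-- A vertex `v` yields a rainbow neighbourhood w.r.t. the colouring `c` if its closed
neighbourhood `N[v]` contains a vertex of every colour class. -/
def yieldsRainbow {V : Type*} {k : ℕ} (G : SimpleGraph V) (c : G.Coloring (Fin k)) (v : V) :
    Prop :=
  ∀ i : Fin k, ∃ u : V, (u = v ∨ G.Adj v u) ∧ c u = i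

/-- The number of vertices yielding a rainbow neighbourhood w.r.t. `c`. -/
noncomputable def rainbowCount {V : Type*} [Fintype V] {k : ℕ} (G : SimpleGraph V)
    (c : G.Coloring (Fin k)) : ℕ :=
  Nat.card {v : V // yieldsRainbow G c v}

/-- The minimum number of vertices yielding a rainbow neighbourhood, over all proper
colourings with exactly `k` colours. -/
noncomputable def rMin {V : Type*} [Fintype V] (G : SimpleGraph V) (k : ℕ) : ℕ :=
  sInf (Set.range fun c : G.Coloring (Fin k) => rainbowCount G c)

/-- The maximum number of vertices yielding a rainbow neighbourhood, over all proper
colourings with exactly `k` colours. -/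
noncomputable def rMax {V : Type*} [Fintype V] (G : SimpleGraph V) (k : ℕ) : ℕ :=
  sSup (Set.range fun c : G.Coloring (Fin k) => rainbowCount G c)

section Aux
variable {m : ℕ}
open Fin.CommRing Fin.NatCast

private lemma adj_succ (v : Fin (m+3)) : (cycleGraph (m+3)).Adj v (v+1) := by
  have : (cycleGraph (m+1+2)).Adj v (v+1) := by
    rw [cycleGraph_adj]; right; ring_nf
  exact this

private lemma adj_iff {v u : Fin (m+3)} :
    (cycleGraph (m+3)).Adj v u ↔ u = v - 1 ∨ u = v + 1 := by
  have h : (cycleGraph (m+1+2)).Adj v u ↔ v - u = 1 ∨ u - v = 1 := cycleGraph_adj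
  rw [show (cycleGraph (m+3)) = cycleGraph (m+1+2) from rfl, h]
  constructor
  · rintro (h1 | h1)
    · left; linear_combination -h1
    · right; linear_combination h1
  · rintro (h1 | h1)
    · left; linear_combination -h1
    · right; linear_combination h1

private lemma telescope {M : Type*} [AddCommGroup M] (f : Fin (m+3) → M) :
    ∑ v : Fin (m+3), (f (v+1) - f v) = 0 := by
  rw [Finset.sum_sub_distrib, sub_eq_zero]
  exact Fintype.sum_equiv (Equiv.addRight 1) _ _ (fun v => rfl)

private lemma rainbowCount_eq {V : Type*} [Fintype V] {k : ℕ} (G : SimpleGraph V)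
    (c : G.Coloring (Fin k)) (p : V → Prop) [DecidablePred p]
    (hp : ∀ v, yieldsRainbow G c v ↔ p v) :
    rainbowCount G c = (Finset.univ.filter p).card := by
  rw [rainbowCount, Nat.card_congr (Equiv.subtypeEquivRight hp), Nat.card_eq_fintype_card,
    Fintype.card_subtype]

private lemma rainbow_char (c : (cycleGraph (m+3)).Coloring (Fin 3)) (v : Fin (m+3)) :
    yieldsRainbow (cycleGraph (m+3)) c v ↔ c (v-1) ≠ c (v+1) := by
  have hadj1 : (cycleGraph (m+3)).Adj v (v-1) := adj_iff.mpr (Or.inl rfl)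
  have hadj2 : (cycleGraph (m+3)).Adj v (v+1) := adj_iff.mpr (Or.inr rfl)
  constructor
  · intro hr heq
    obtain ⟨i, hi1, hi2⟩ := (by decide : ∀ a b : Fin 3, ∃ i : Fin 3, i ≠ a ∧ i ≠ b)
      (c v) (c (v-1))
    obtain ⟨u, hu, hcu⟩ := hr i
    rcases hu with rfl | hadj
    · exact hi1 hcu.symm
    · rcases adj_iff.mp hadj with rfl | rfl
      · exact hi2 hcu.symm
      · exact hi2 (heq ▸ hcu).symm
  · intro hne i
    have h1 : c v ≠ c (v-1) := c.valid hadj1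
    have h2 : c v ≠ c (v+1) := c.valid hadj2
    have := (by decide : ∀ a b c i : Fin 3, a ≠ b → a ≠ c → b ≠ c → i = a ∨ i = b ∨ i = c)
      (c v) (c (v-1)) (c (v+1)) i h1 h2 hne
    rcases this with h | h | h
    · exact ⟨v, Or.inl rfl, h.symm⟩
    · exact ⟨v-1, Or.inr hadj1, h.symm⟩
    · exact ⟨v+1, Or.inr hadj2, h.symm⟩

private lemma lower_bound (hodd : Odd (m+3)) (c : (cycleGraph (m+3)).Coloring (Fin 3)) :
    3 ≤ rainbowCount (cycleGraph (m+3)) c := by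
  classical
  set C : Fin (m+3) → ZMod 3 := fun v => c v with hC
  set d : Fin (m+3) → ZMod 3 := fun v => C (v+1) - C v with hd
  have hd0 : ∀ v, d v ≠ 0 := by
    intro v h
    have : C (v+1) = C v := by rwa [hd, sub_eq_zero] at h
    exact c.valid (adj_succ v) this.symm
  -- rainbow iff d (v-1) = d v
  have hchar : ∀ v, yieldsRainbow (cycleGraph (m+3)) c v ↔ d (v-1) = d v := by
    intro v
    rw [rainbow_char]
    have key : ∀ x y : ZMod 3, x ≠ 0 → y ≠ 0 → ((x = y) ↔ x + y ≠ 0) := by decide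
    have hsum : d (v-1) + d v = C (v+1) - C (v-1) := by
      simp only [hd, sub_add_cancel]; ring
    have hcc : (c (v-1) ≠ c (v+1)) ↔ C (v-1) ≠ C (v+1) := Iff.rfl
    rw [hcc, key _ _ (hd0 (v-1)) (hd0 v), hsum, sub_ne_zero, ne_comm]
  rw [rainbowCount_eq _ c (fun v => d (v-1) = d v) hchar]
  set r := (Finset.univ.filter (fun v => d (v-1) = d v)).card with hr
  set s := (Finset.univ.filter (fun v => ¬ (d (v-1) = d v))).card with hs
  set g : Fin (m+3) → ZMod 2 := fun v => if d v = 1 then 0 else 1 with hg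
  have keyg : ∀ x y : ZMod 3, x ≠ 0 → y ≠ 0 →
      (if x = y then (0:ZMod 2) else 1) = (if y = 1 then 0 else 1) - (if x = 1 then 0 else 1) := by
    decide
  have hsum0 : ∑ v : Fin (m+3), (if d (v-1) = d v then (0:ZMod 2) else 1) = 0 := by
    have heq : ∑ v : Fin (m+3), (if d (v-1) = d v then (0:ZMod 2) else 1)
        = ∑ v : Fin (m+3), ((fun v => g (v-1)) (v+1) - (fun v => g (v-1)) v) := by
      apply Finset.sum_congr rfl
      intro v _
      simp only [add_sub_cancel_right]
      exact keyg _ _ (hd0 (v-1)) (hd0 v)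
    rw [heq]
    exact telescope _
  have hcard : ((s : ZMod 2)) = 0 := by
    have h1 : ((s : ZMod 2)) = ∑ v : Fin (m+3), (if d (v-1) = d v then (0:ZMod 2) else 1) := by
      rw [hs, ← Finset.sum_boole]
      apply Finset.sum_congr rfl
      intro v _
      by_cases h : d (v-1) = d v <;> simp [h]
    rw [h1, hsum0]
  have heven : 2 ∣ s := by
    rwa [ZMod.natCast_eq_zero_iff] at hcard
  have htot : r + s = m + 3 := by
    rw [hr, hs, Finset.card_filter_add_card_filter_not]
    simp
  obtain ⟨t, ht⟩ := heven
  obtain ⟨j, hj⟩ := hodd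
  rcases Nat.lt_or_ge r 3 with hlt | hge
  · exfalso
    have hr1 : r = 1 := by omega
    obtain ⟨v₀, hv₀⟩ := Finset.card_eq_one.mp (hr.symm.trans hr1)
    have keyneg : ∀ x y : ZMod 3, x ≠ 0 → y ≠ 0 → x ≠ y → y = -x := by decide
    have hchange : ∀ v : Fin (m+3), v ≠ v₀ → d v = - d (v-1) := by
      intro v hv
      have hnp : ¬ (d (v-1) = d v) := by
        intro hp
        apply hv
        have : v ∈ Finset.univ.filter (fun v => d (v-1) = d v) :=
          Finset.mem_filter.mpr ⟨Finset.mem_univ v, hp⟩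
        rw [hv₀, Finset.mem_singleton] at this
        exact this
      exact keyneg _ _ (hd0 (v-1)) (hd0 v) hnp
    have hk : ∀ k : ℕ, k < m+3 → d (v₀ + (k : Fin (m+3))) = (-1)^k * d v₀ := by
      intro k
      induction k with
      | zero => intro _; simp
      | succ k ih =>
        intro hklt
        have hne : v₀ + ((k+1 : ℕ) : Fin (m+3)) ≠ v₀ := by
          intro h
          have h0 : ((k+1 : ℕ) : Fin (m+3)) = 0 := add_eq_left.mp h
          have h2 : ((k+1 : ℕ) : Fin (m+3)).val = 0 := by rw [h0]; rfl
          rw [Fin.val_natCast, Nat.mod_eq_of_lt hklt] at h2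
          omega
        have hstep := hchange _ hne
        have harg : (v₀ + ((k+1 : ℕ) : Fin (m+3))) - 1 = v₀ + (k : Fin (m+3)) := by
          push_cast
          ring
        rw [hstep, harg, ih (by omega)]
        ring
    have hzero : ∑ v : Fin (m+3), d v = 0 := by
      rw [hd]; exact telescope C
    have hfinal : (0 : ZMod 3) = d v₀ := by
      calc (0:ZMod 3) = ∑ v : Fin (m+3), d v := hzero.symm
        _ = ∑ k ∈ Finset.range (m+3), d (v₀ + (k : Fin (m+3))) := by
            rw [← Fin.sum_univ_eq_sum_range (fun k => d (v₀ + (k : Fin (m+3))))]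
            exact (Fintype.sum_equiv (Equiv.addLeft v₀)
              (fun i => d (v₀ + ((i.val : ℕ) : Fin (m+3)))) (fun v => d v)
              (fun i => by simp)).symm
        _ = ∑ k ∈ Finset.range (m+3), (-1)^k * d v₀ :=
            Finset.sum_congr rfl (fun k hk' => hk k (Finset.mem_range.mp hk'))
        _ = (∑ k ∈ Finset.range (m+3), (-1:ZMod 3)^k) * d v₀ := (Finset.sum_mul _ _ _).symm
        _ = 1 * d v₀ := by
            rw [neg_one_geom_sum, if_neg (by rw [Nat.even_iff]; omega)]
        _ = d v₀ := one_mul _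
    exact hd0 v₀ hfinal.symm
  · exact hge

private def f0 (m : ℕ) (v : Fin (m+3)) : Fin 3 :=
  ⟨if v.val = m+2 then 2 else v.val % 2, by split <;> omega⟩

private lemma val_sub_one' (v : Fin (m+3)) :
    (v - 1).val = if v.val = 0 then m+2 else v.val - 1 := by
  rw [Fin.coe_sub_one]
  by_cases h : v = 0
  · rw [if_pos h, if_pos (by rw [h]; rfl)]
  · rw [if_neg h, if_neg (show ¬ (v.val = 0) from fun hv => h (Fin.ext hv))]

private lemma val_add_one' (v : Fin (m+3)) :
    (v + 1).val = if v.val = m+2 then 0 else v.val + 1 := by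
  rw [Fin.val_add_one]
  by_cases h : v = Fin.last (m+2)
  · rw [if_pos h, if_pos (by rw [h]; rfl)]
  · rw [if_neg h, if_neg (show ¬ (v.val = m+2) from fun hv => h (Fin.ext hv))]

private lemma f0_step (v : Fin (m+3)) : f0 m (v+1) ≠ f0 m v := by
  have ha := val_add_one' v
  have hv := v.isLt
  simp only [f0, Ne, Fin.mk.injEq, ha]
  by_cases h : v.val = m+2 <;> by_cases h2 : v.val = m+1 <;> simp [h, h2] <;> omega

private def c0 (m : ℕ) : (cycleGraph (m+3)).Coloring (Fin 3) :=
  Coloring.mk (f0 m) (by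
    intro u v hadj
    rcases adj_iff.mp hadj with rfl | rfl
    · have := f0_step (u-1)
      rwa [sub_add_cancel] at this
    · exact (f0_step u).symm)

private lemma count_c0 (hodd : Odd (m+3)) :
    rainbowCount (cycleGraph (m+3)) (c0 m) = 3 := by
  classical
  have hm : m % 2 = 0 := by obtain ⟨j, hj⟩ := hodd; omega
  rw [rainbowCount_eq _ (c0 m) (fun v => v.val = 0 ∨ v.val = m+1 ∨ v.val = m+2) ?_]
  · have hset : Finset.univ.filter (fun v : Fin (m+3) => v.val = 0 ∨ v.val = m+1 ∨ v.val = m+2)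
        = {(⟨0, by omega⟩ : Fin (m+3)), ⟨m+1, by omega⟩, ⟨m+2, by omega⟩} := by
      ext v
      simp only [Finset.mem_filter, Finset.mem_univ, true_and, Finset.mem_insert,
        Finset.mem_singleton, Fin.ext_iff, Fin.val_mk]
    rw [hset, Finset.card_insert_of_notMem (by simp [Fin.ext_iff]),
      Finset.card_insert_of_notMem (by simp [Fin.ext_iff]), Finset.card_singleton]
  · intro v
    rw [rainbow_char]
    have happ : ∀ u, (c0 m) u = f0 m u := fun u => rfl
    have hsub := val_sub_one' v
    have hadd := val_add_one' v
    have hv := v.isLt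
    rw [happ, happ]
    simp only [f0, Ne, Fin.mk.injEq, hsub, hadd]
    split_ifs <;> omega

private lemma not_colorable_two (hodd : Odd (m+3)) : ¬ (cycleGraph (m+3)).Colorable 2 := by
  rintro ⟨c⟩
  set C : Fin (m+3) → ZMod 2 := fun v => c v with hC
  have hstep : ∀ v, C (v+1) = C v + 1 := by
    intro v
    have hne : C (v+1) ≠ C v := fun h => c.valid (adj_succ v) h.symm
    exact (by decide : ∀ a b : ZMod 2, a ≠ b → a = b + 1) _ _ hne
  have key : ∀ k : ℕ, C ((k : Fin (m+3))) = C 0 + (k : ZMod 2) := by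
    intro k
    induction k with
    | zero => simp
    | succ k ih =>
      have h1 : ((k+1 : ℕ) : Fin (m+3)) = (k : Fin (m+3)) + 1 := by push_cast; ring
      rw [h1, hstep, ih]
      push_cast
      ring
  have h0 := key (m+3)
  rw [Fin.natCast_self] at h0
  have h2 : ((m+3 : ℕ) : ZMod 2) = 0 := (left_eq_add.mp h0)
  rw [ZMod.natCast_eq_zero_iff] at h2
  obtain ⟨j, hj⟩ := hodd
  omega

private lemma chrom (hodd : Odd (m+3)) : (cycleGraph (m+3)).chromaticNumber = 3 := by
  apply le_antisymm
  · exact chromaticNumber_le_iff_colorable.mpr ⟨c0 m⟩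
  · by_contra h
    push_neg at h
    have h2 : (cycleGraph (m+3)).chromaticNumber ≤ 2 := by
      have h3 : (3 : ℕ∞) = 2 + 1 := rfl
      rw [h3] at h
      exact ENat.lt_add_one_iff (by decide) |>.mp h
    exact not_colorable_two hodd (chromaticNumber_le_iff_colorable.mp h2)

end Aux

/-- For every odd `n ≥ 3`, the cycle `C_n` has `χ(C_n) = 3` and the
minimum rainbow neighbourhood number `r⁻_χ(C_n) = 3`. -/
theorem rMin_cycle_odd (n : ℕ) (hn : 3 ≤ n) (hodd : Odd n) :
    (SimpleGraph.cycleGraph n).chromaticNumber = 3 ∧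
      rMin (SimpleGraph.cycleGraph n) 3 = 3 := by
  obtain ⟨m, rfl⟩ : ∃ m, n = m + 3 := ⟨n - 3, by omega⟩
  refine ⟨chrom hodd, ?_⟩
  unfold rMin
  have hmem : (3:ℕ) ∈ Set.range
      (fun c : (cycleGraph (m+3)).Coloring (Fin 3) => rainbowCount (cycleGraph (m+3)) c) :=
    ⟨c0 m, count_c0 hodd⟩
  apply le_antisymm
  · exact Nat.sInf_le hmem
  · apply le_csInf ⟨3, hmem⟩
    rintro x ⟨c, rfl⟩
    exact lower_bound hodd c
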